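/- Let S be a nonempty set and let Δ' ⊆ Δ be two enriched quantum logics on S such that Δ' is moreover a Boolean algebra of sets (closed under complements in S, binary unions and binary intersections, with S ∈ Δ'). Then every state s on (S, Δ') can be extended to a state on (S, Δ); that is, there exists a state t on (S, Δ) with t(A) = s(A) for all A ∈ Δ'. -/
import Mathlib


open scoped symmDiff

/-- An enriched quantum logic (EQL) on a (nonempty) set `S` (here: the type `α`):
a collection `Δ` of subsets containing the whole set and closed under symmetric
difference. -/
def IsEQL {α : Type*} (Δ : Set (Set α)) : Prop :=
  Set.univ ∈ Δ ∧ ∀ A ∈ Δ, ∀ B ∈ Δ, A ∆ B ∈ Δ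

/-- A state on an EQL `(S, Δ)`: a `[0,1]`-valued map, normalized, additive on
disjoint pairs of `Δ`, and subadditive with respect to symmetric difference. -/
def IsState {α : Type*} (Δ : Set (Set α)) (s : Set α → ℝ) : Prop :=
  (∀ A ∈ Δ, s A ∈ Set.Icc (0 : ℝ) 1) ∧ s Set.univ = 1 ∧
    (∀ A ∈ Δ, ∀ B ∈ Δ, A ∩ B = ∅ → s (A ∪ B) = s A + s B) ∧
    (∀ A ∈ Δ, ∀ B ∈ Δ, s (A ∆ B) ≤ s A + s B)

/-- `Δ` is a Boolean algebra of subsets of `S`. -/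
def IsBoolAlgOfSets {α : Type*} (Δ : Set (Set α)) : Prop :=
  Set.univ ∈ Δ ∧ (∀ A ∈ Δ, Aᶜ ∈ Δ) ∧
    (∀ A ∈ Δ, ∀ B ∈ Δ, A ∪ B ∈ Δ) ∧ (∀ A ∈ Δ, ∀ B ∈ Δ, A ∩ B ∈ Δ)

/-- The submodule of bounded functions `α → ℝ`. -/
noncomputable def BddF (α : Type*) : Submodule ℝ (α → ℝ) where
  carrier := {f | ∃ C : ℝ, ∀ x, |f x| ≤ C}
  add_mem' := by
    rintro f g ⟨C, hC⟩ ⟨D, hD⟩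
    exact ⟨C + D, fun x => (abs_add_le _ _).trans (add_le_add (hC x) (hD x))⟩
  zero_mem' := ⟨0, fun x => by simp⟩
  smul_mem' := by
    rintro c f ⟨C, hC⟩
    exact ⟨|c| * C, fun x => by
      rw [Pi.smul_apply, smul_eq_mul, abs_mul]
      exact mul_le_mul_of_nonneg_left (hC x) (abs_nonneg c)⟩

/-- The key finite "integral" bound: for sets `Aᵢ ∈ Δ'` and reals `cᵢ`, if the
simple function `∑ cᵢ 1_{Aᵢ}` is bounded by `M` on `T ∈ Δ'`, then
`∑ cᵢ s(Aᵢ ∩ T) ≤ M · s T`. -/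
theorem key_bound {α : Type*} {Δ' : Set (Set α)} (hbool : IsBoolAlgOfSets Δ')
    {s : Set α → ℝ} (hs : IsState Δ' s) {ι : Type*} [DecidableEq ι]
    (A : ι → Set α) (c : ι → ℝ) :
    ∀ (I : Finset ι), (∀ i ∈ I, A i ∈ Δ') → ∀ T ∈ Δ', ∀ M : ℝ,
      (∀ x ∈ T, ∑ i ∈ I, c i * (A i).indicator 1 x ≤ M) →
      ∑ i ∈ I, c i * s (A i ∩ T) ≤ M * s T := by
  obtain ⟨huniv, hcompl, hunion, hinter⟩ := hbool
  obtain ⟨hrange, hsuniv, hadd, _⟩ := hs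
  have hempty : (∅ : Set α) ∈ Δ' := by simpa using hcompl _ huniv
  have hs0 : s ∅ = 0 := by
    have := hadd ∅ hempty ∅ hempty (by simp)
    simp only [Set.union_empty] at this
    linarith
  intro I
  induction I using Finset.induction_on with
  | empty =>
    intro _ T hT M hM
    simp only [Finset.sum_empty]
    rcases eq_or_ne T ∅ with rfl | hne
    · simp [hs0]
    · obtain ⟨x, hx⟩ := Set.nonempty_iff_ne_empty.2 hne
      have hM0 : 0 ≤ M := by simpa using hM x hx
      exact mul_nonneg hM0 (hrange T hT).1
  | @insert j I hjI ih =>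
    intro hA T hT M hM
    have hAj : A j ∈ Δ' := hA j (Finset.mem_insert_self j I)
    have hA' : ∀ i ∈ I, A i ∈ Δ' := fun i hi => hA i (Finset.mem_insert_of_mem hi)
    set T' := A j ∩ T with hT'def
    set T'' := (A j)ᶜ ∩ T with hT''def
    have hT' : T' ∈ Δ' := hinter _ hAj _ hT
    have hT'' : T'' ∈ Δ' := hinter _ (hcompl _ hAj) _ hT
    have hdisj : T' ∩ T'' = ∅ := by
      ext x; simp only [hT'def, hT''def, Set.mem_inter_iff, Set.mem_compl_iff,
        Set.mem_empty_iff_false, iff_false]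
      tauto
    have hTsplit : T' ∪ T'' = T := by
      rw [hT'def, hT''def, ← Set.union_inter_distrib_right, Set.union_compl_self,
        Set.univ_inter]
    have hsT : s T = s T' + s T'' := by
      have := hadd _ hT' _ hT'' hdisj
      rw [hTsplit] at this; exact this
    have hsplit : ∀ i ∈ I, s (A i ∩ T) = s (A i ∩ T') + s (A i ∩ T'') := by
      intro i hi
      have h1 : A i ∩ T' ∈ Δ' := hinter _ (hA' i hi) _ hT'
      have h2 : A i ∩ T'' ∈ Δ' := hinter _ (hA' i hi) _ hT''
      have hd : (A i ∩ T') ∩ (A i ∩ T'') = ∅ := by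
        ext x; simp only [hT'def, hT''def, Set.mem_inter_iff, Set.mem_compl_iff,
          Set.mem_empty_iff_false, iff_false]
        tauto
      have hu : (A i ∩ T') ∪ (A i ∩ T'') = A i ∩ T := by
        rw [← Set.inter_union_distrib_left, hTsplit]
      have := hadd _ h1 _ h2 hd
      rw [hu] at this; exact this
    have ih1 : ∑ i ∈ I, c i * s (A i ∩ T') ≤ (M - c j) * s T' := by
      refine ih hA' T' hT' (M - c j) (fun x hx => ?_)
      have hxj : x ∈ A j := hx.1
      have hxT : x ∈ T := hx.2
      have := hM x hxT
      rw [Finset.sum_insert hjI, Set.indicator_of_mem hxj, Pi.one_apply, mul_one] at this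
      linarith
    have ih2 : ∑ i ∈ I, c i * s (A i ∩ T'') ≤ M * s T'' := by
      refine ih hA' T'' hT'' M (fun x hx => ?_)
      have hxj : x ∉ A j := hx.1
      have hxT : x ∈ T := hx.2
      have := hM x hxT
      rw [Finset.sum_insert hjI, Set.indicator_of_notMem hxj, mul_zero, zero_add] at this
      exact this
    have hsum : ∑ i ∈ I, c i * s (A i ∩ T)
        = ∑ i ∈ I, c i * s (A i ∩ T') + ∑ i ∈ I, c i * s (A i ∩ T'') := by
      rw [← Finset.sum_add_distrib]
      exact Finset.sum_congr rfl fun i hi => by rw [hsplit i hi]; ring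
    rw [Finset.sum_insert hjI, hsum, hsT]
    have hAjT : A j ∩ T = T' := rfl
    rw [hAjT, sub_mul] at *
    nlinarith [ih1, ih2]

/-- If `Δ' ⊆ Δ` are EQLs on `S` and `Δ'` is moreover a Boolean algebra of
sets, then any state on `(S, Δ')` extends to a state on `(S, Δ)`. -/
theorem stmt10 {α : Type*} [Nonempty α] (Δ' Δ : Set (Set α))
    (hsub : Δ' ⊆ Δ) (h' : IsEQL Δ') (h : IsEQL Δ) (hbool : IsBoolAlgOfSets Δ')
    (s : Set α → ℝ) (hs : IsState Δ' s) :
    ∃ t : Set α → ℝ, IsState Δ t ∧ ∀ A ∈ Δ', t A = s A := by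
  classical
  obtain ⟨huniv, hcompl, hunion, hinter⟩ := id hbool
  obtain ⟨hrange, hsuniv, hadd, -⟩ := id hs
  -- bounded functions and indicators
  let ind : Set α → BddF α := fun A => ⟨A.indicator 1, 1, fun x => by
    by_cases hx : x ∈ A <;> simp [Set.indicator_apply, hx]⟩
  have ind_apply : ∀ (A : Set α) (x : α), ((ind A : α → ℝ)) x = A.indicator 1 x :=
    fun A x => rfl
  -- the sup functional
  have hbddA : ∀ f : BddF α, BddAbove (Set.range ((f : α → ℝ))) := by
    rintro ⟨f, C, hC⟩
    exact ⟨C, by rintro y ⟨x, rfl⟩; exact (abs_le.1 (hC x)).2⟩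
  let N : BddF α → ℝ := fun f => ⨆ x, (f : α → ℝ) x
  have le_N : ∀ (f : BddF α) (x : α), (f : α → ℝ) x ≤ N f :=
    fun f x => le_ciSup (hbddA f) x
  have N_le : ∀ (f : BddF α) (M : ℝ), (∀ x, (f : α → ℝ) x ≤ M) → N f ≤ M :=
    fun f M hM => ciSup_le hM
  have N_hom : ∀ c : ℝ, 0 < c → ∀ f : BddF α, N (c • f) = c * N f := by
    intro c hc f
    show (⨆ x, c * (f : α → ℝ) x) = c * ⨆ x, (f : α → ℝ) x
    exact (Real.mul_iSup_of_nonneg hc.le _).symm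
  have N_add : ∀ f g : BddF α, N (f + g) ≤ N f + N g := fun f g =>
    N_le _ _ fun x => add_le_add (le_N f x) (le_N g x)
  -- the linear maps on formal combinations
  let φ : (↥Δ' →₀ ℝ) →ₗ[ℝ] BddF α :=
    Finsupp.linearCombination ℝ (fun A : ↥Δ' => ind A.1)
  let ψ : (↥Δ' →₀ ℝ) →ₗ[ℝ] ℝ :=
    Finsupp.linearCombination ℝ (fun A : ↥Δ' => s A.1)
  have hφx : ∀ (l : ↥Δ' →₀ ℝ) (x : α),
      ((φ l : α → ℝ)) x = ∑ A ∈ l.support, l A * (A : Set α).indicator 1 x := by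
    intro l x
    have evx : BddF α →ₗ[ℝ] ℝ := (LinearMap.proj x).comp (BddF α).subtype
    calc ((φ l : α → ℝ)) x
        = ((LinearMap.proj x).comp (BddF α).subtype) (φ l) := rfl
      _ = Finsupp.linearCombination ℝ
            (((LinearMap.proj x).comp (BddF α).subtype) ∘ (fun A : ↥Δ' => ind A.1)) l :=
          Finsupp.apply_linearCombination ℝ _ _ l
      _ = ∑ A ∈ l.support, l A * (A : Set α).indicator 1 x := by
          rw [Finsupp.linearCombination_apply, Finsupp.sum]
          exact Finset.sum_congr rfl fun A _ => rfl
  have hψ : ∀ l : ↥Δ' →₀ ℝ, ψ l = ∑ A ∈ l.support, l A * s A.1 := by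
    intro l
    rw [show ψ l = Finsupp.linearCombination ℝ (fun A : ↥Δ' => s A.1) l from rfl,
      Finsupp.linearCombination_apply, Finsupp.sum]
    exact Finset.sum_congr rfl fun A _ => rfl
  -- the key bound
  have hbound : ∀ (l : ↥Δ' →₀ ℝ) (M : ℝ), (∀ x, ((φ l : α → ℝ)) x ≤ M) → ψ l ≤ M := by
    intro l M hM
    have hk := key_bound hbool hs
      (fun A : ↥Δ' => (A : Set α)) (fun A => l A) l.support (fun i _ => i.2)
      Set.univ huniv M (fun x _ => by rw [← hφx l x]; exact hM x)
    simp only [Set.inter_univ, hsuniv, mul_one] at hk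
    rw [hψ l]; exact hk
  have hker : LinearMap.ker φ ≤ LinearMap.ker ψ := by
    intro l hl
    rw [LinearMap.mem_ker] at hl ⊢
    have h1 : ψ l ≤ 0 := hbound l 0 (fun x => by rw [hl]; exact le_of_eq rfl)
    have h2 : ψ (-l) ≤ 0 := hbound (-l) 0 (fun x => by rw [map_neg, hl, neg_zero]; exact le_of_eq rfl)
    rw [map_neg] at h2
    linarith
  -- factor ψ through the range of φ
  let L : ↥(LinearMap.range φ) →ₗ[ℝ] ℝ :=
    (Submodule.liftQ (LinearMap.ker φ) ψ hker).comp φ.quotKerEquivRange.symm.toLinearMap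
  have hL : ∀ l : ↥Δ' →₀ ℝ, L ⟨φ l, ⟨l, rfl⟩⟩ = ψ l := by
    intro l
    have h1 : φ.quotKerEquivRange.symm ⟨φ l, ⟨l, rfl⟩⟩ = (LinearMap.ker φ).mkQ l :=
      LinearMap.quotKerEquivRange_symm_apply_image φ l ⟨l, rfl⟩
    show (Submodule.liftQ (LinearMap.ker φ) ψ hker) (φ.quotKerEquivRange.symm ⟨φ l, ⟨l, rfl⟩⟩) = ψ l
    rw [h1]
    exact Submodule.liftQ_apply _ ψ l
  -- Hahn–Banach
  let F : (BddF α) →ₗ.[ℝ] ℝ := ⟨LinearMap.range φ, L⟩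
  have hF : ∀ x : F.domain, F x ≤ N x := by
    rintro ⟨w, l, rfl⟩
    have : F ⟨φ l, ⟨l, rfl⟩⟩ = ψ l := hL l
    rw [this]
    exact hbound l (N (φ l)) (le_N (φ l))
  obtain ⟨g, hg1, hg2⟩ := exists_extension_of_le_sublinear F N N_hom N_add hF
  have hgφ : ∀ l : ↥Δ' →₀ ℝ, g (φ l) = ψ l := fun l =>
    (hg1 ⟨φ l, ⟨l, rfl⟩⟩).trans (hL l)
  -- nonnegativity of g on nonnegative functions
  have hg0 : ∀ f : BddF α, (∀ x, 0 ≤ (f : α → ℝ) x) → 0 ≤ g f := by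
    intro f hf0
    have hN : N (-f) ≤ 0 := N_le _ _ (fun x => by
      show -(f : α → ℝ) x ≤ 0
      linarith [hf0 x])
    have : g (-f) ≤ 0 := le_trans (hg2 _) hN
    rw [map_neg] at this
    linarith
  -- the extension
  refine ⟨fun A => g (ind A), ⟨?_, ?_, ?_, ?_⟩, ?_⟩
  · -- range in [0,1]
    intro A _
    constructor
    · exact hg0 (ind A) fun x => Set.indicator_apply_nonneg (fun _ => zero_le_one)
    · refine le_trans (hg2 (ind A)) (N_le _ _ fun x => ?_)
      rw [ind_apply]
      by_cases hx : x ∈ A <;> simp [Set.indicator_apply, hx]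
  · -- normalization
    show g (ind Set.univ) = 1
    have h1 : ind Set.univ = φ (Finsupp.single ⟨Set.univ, huniv⟩ 1) := by
      rw [show φ (Finsupp.single ⟨Set.univ, huniv⟩ 1)
          = (1 : ℝ) • ind Set.univ from Finsupp.linearCombination_single ℝ _ _, one_smul]
    rw [h1, hgφ, show ψ (Finsupp.single ⟨Set.univ, huniv⟩ 1)
        = (1 : ℝ) • s Set.univ from Finsupp.linearCombination_single ℝ _ _, one_smul, hsuniv]
  · -- additivity
    intro A _ B _ hAB
    have : ind (A ∪ B) = ind A + ind B := by
      apply Subtype.ext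
      show (A ∪ B).indicator (1 : α → ℝ) = A.indicator 1 + B.indicator 1
      exact Set.indicator_union_of_disjoint (Set.disjoint_iff_inter_eq_empty.2 hAB) 1
    show g (ind (A ∪ B)) = g (ind A) + g (ind B)
    rw [this, map_add]
  · -- symmetric difference subadditivity
    intro A _ B _
    have h0 : 0 ≤ g (ind A + ind B - ind (A ∆ B)) := by
      apply hg0
      intro x
      show 0 ≤ A.indicator 1 x + B.indicator 1 x - (A ∆ B).indicator (1 : α → ℝ) x
      by_cases hA : x ∈ A <;> by_cases hB : x ∈ B <;>
        simp [Set.indicator_apply, Set.mem_symmDiff, hA, hB]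
    rw [map_sub, map_add] at h0
    show g (ind (A ∆ B)) ≤ g (ind A) + g (ind B)
    linarith
  · -- extension of s
    intro A hA
    show g (ind A) = s A
    have h1 : ind A = φ (Finsupp.single ⟨A, hA⟩ 1) := by
      rw [show φ (Finsupp.single ⟨A, hA⟩ 1)
          = (1 : ℝ) • ind A from Finsupp.linearCombination_single ℝ _ _, one_smul]
    rw [h1, hgφ, show ψ (Finsupp.single ⟨A, hA⟩ 1)
        = (1 : ℝ) • s A from Finsupp.linearCombination_single ℝ _ _, one_smul]
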